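/- For real parameters X_A, X_B, τ > 0 with X_B > τ, the function f(X₁) = (X_A/X₁)·(1 − X_B/(X₁ + √(X₁² − τ²))) defined for X₁ ≥ τ is increasing on [τ, √(X_B² + τ²)] and decreasing on [√(X_B² + τ²), ∞), so X₁ = √(X_B² + τ²) is its global maximizer on [τ, ∞). -/

import Mathlib

private lemma sqrt_nn {τ X : ℝ} (hτ : 0 < τ) (hX : τ ≤ X) :
    (0:ℝ) ≤ X ^ 2 - τ ^ 2 := by nlinarith

/-- core algebraic comparison in the increasing regime -/
private lemma core_mono {XB τ X Y sX sY : ℝ} (hτ : 0 < τ) (hXB : 0 < XB)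
    (hX : τ ≤ X) (hY : τ ≤ Y)
    (hsX0 : 0 ≤ sX) (hsY0 : 0 ≤ sY)
    (hX2 : X ^ 2 = sX ^ 2 + τ ^ 2) (hY2 : Y ^ 2 = sY ^ 2 + τ ^ 2)
    (hss : sX ≤ sY) (hsY : sY ≤ XB) :
    Y * (τ ^ 2 + XB * sX) ≤ X * (τ ^ 2 + XB * sY) := by
  have hsX : sX ≤ XB := le_trans hss hsY
  have hB : 0 ≤ (sY - sX) * τ ^ 2 *
      (XB * sX * (XB - sY) + XB * sY * (XB - sX) + τ ^ 2 * ((XB - sX) + (XB - sY))) := by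
    have h1 : 0 ≤ XB - sY := by linarith
    have h2 : 0 ≤ XB - sX := by linarith
    have : 0 ≤ XB * sX * (XB - sY) + XB * sY * (XB - sX) + τ ^ 2 * ((XB - sX) + (XB - sY)) := by
      have := mul_nonneg (mul_nonneg hXB.le hsX0) h1
      have := mul_nonneg (mul_nonneg hXB.le hsY0) h2
      nlinarith [sq_nonneg τ]
    have := mul_nonneg (mul_nonneg (by linarith : (0:ℝ) ≤ sY - sX) (sq_nonneg τ)) this
    linarith
  have key2 : (X * (τ ^ 2 + XB * sY)) ^ 2 - (Y * (τ ^ 2 + XB * sX)) ^ 2 =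
      (sY - sX) * τ ^ 2 *
      (XB * sX * (XB - sY) + XB * sY * (XB - sX) + τ ^ 2 * ((XB - sX) + (XB - sY))) := by
    linear_combination (τ ^ 2 + XB * sY) ^ 2 * hX2 - (τ ^ 2 + XB * sX) ^ 2 * hY2
  have hsq : (Y * (τ ^ 2 + XB * sX)) ^ 2 ≤ (X * (τ ^ 2 + XB * sY)) ^ 2 := by linarith
  have h1 : 0 ≤ Y * (τ ^ 2 + XB * sX) := by
    apply mul_nonneg (by linarith)
    nlinarith [mul_nonneg hXB.le hsX0]
  have h2 : 0 ≤ X * (τ ^ 2 + XB * sY) := by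
    apply mul_nonneg (by linarith)
    nlinarith [mul_nonneg hXB.le hsY0]
  have := Real.sqrt_le_sqrt hsq
  rwa [Real.sqrt_sq h1, Real.sqrt_sq h2] at this

/-- core algebraic comparison in the decreasing regime -/
private lemma core_anti {XB τ X Y sX sY : ℝ} (hτ : 0 < τ) (hXB : 0 < XB)
    (hX : τ ≤ X) (hY : τ ≤ Y)
    (hsX0 : 0 ≤ sX) (hsY0 : 0 ≤ sY)
    (hX2 : X ^ 2 = sX ^ 2 + τ ^ 2) (hY2 : Y ^ 2 = sY ^ 2 + τ ^ 2)
    (hss : sX ≤ sY) (hsX : XB ≤ sX) :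
    X * (τ ^ 2 + XB * sY) ≤ Y * (τ ^ 2 + XB * sX) := by
  have hsY : XB ≤ sY := le_trans hsX hss
  have hB : 0 ≤ (sY - sX) * τ ^ 2 *
      (XB * sX * (sY - XB) + XB * sY * (sX - XB) + τ ^ 2 * ((sX - XB) + (sY - XB))) := by
    have h1 : 0 ≤ sY - XB := by linarith
    have h2 : 0 ≤ sX - XB := by linarith
    have : 0 ≤ XB * sX * (sY - XB) + XB * sY * (sX - XB) + τ ^ 2 * ((sX - XB) + (sY - XB)) := by
      have := mul_nonneg (mul_nonneg hXB.le hsX0) h1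
      have := mul_nonneg (mul_nonneg hXB.le hsY0) h2
      nlinarith [sq_nonneg τ]
    have := mul_nonneg (mul_nonneg (by linarith : (0:ℝ) ≤ sY - sX) (sq_nonneg τ)) this
    linarith
  have key2 : (Y * (τ ^ 2 + XB * sX)) ^ 2 - (X * (τ ^ 2 + XB * sY)) ^ 2 =
      (sY - sX) * τ ^ 2 *
      (XB * sX * (sY - XB) + XB * sY * (sX - XB) + τ ^ 2 * ((sX - XB) + (sY - XB))) := by
    linear_combination (τ ^ 2 + XB * sX) ^ 2 * hY2 - (τ ^ 2 + XB * sY) ^ 2 * hX2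
  have hsq : (X * (τ ^ 2 + XB * sY)) ^ 2 ≤ (Y * (τ ^ 2 + XB * sX)) ^ 2 := by linarith
  have h1 : 0 ≤ X * (τ ^ 2 + XB * sY) := by
    apply mul_nonneg (by linarith)
    nlinarith [mul_nonneg hXB.le hsY0]
  have h2 : 0 ≤ Y * (τ ^ 2 + XB * sX) := by
    apply mul_nonneg (by linarith)
    nlinarith [mul_nonneg hXB.le hsX0]
  have := Real.sqrt_le_sqrt hsq
  rwa [Real.sqrt_sq h1, Real.sqrt_sq h2] at this

/-- rewrite f in a division-friendly form -/
private lemma f_eq {XA XB τ X : ℝ} (hτ : 0 < τ) (hX : τ ≤ X) :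
    (XA / X) * (1 - XB / (X + Real.sqrt (X ^ 2 - τ ^ 2))) =
      XA * ((τ ^ 2 - XB * X + XB * Real.sqrt (X ^ 2 - τ ^ 2)) / (τ ^ 2 * X)) := by
  set s := Real.sqrt (X ^ 2 - τ ^ 2) with hs
  have hs0 : 0 ≤ s := Real.sqrt_nonneg _
  have hs2 : s ^ 2 = X ^ 2 - τ ^ 2 := Real.sq_sqrt (sqrt_nn hτ hX)
  have hXpos : 0 < X := lt_of_lt_of_le hτ hX
  have hXs : 0 < X + s := by linarith
  have hτ2 : (τ:ℝ) ^ 2 ≠ 0 := by positivity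
  field_simp
  linear_combination (-(XA * XB)) * hs2

/-- from the core inequality, compare f values -/
private lemma f_step {XA XB τ X Y : ℝ} (hXA : 0 < XA) (hτ : 0 < τ)
    (hX : τ ≤ X) (hY : τ ≤ Y)
    (hkey : Y * (τ ^ 2 + XB * Real.sqrt (X ^ 2 - τ ^ 2)) ≤
            X * (τ ^ 2 + XB * Real.sqrt (Y ^ 2 - τ ^ 2))) :
    (XA / X) * (1 - XB / (X + Real.sqrt (X ^ 2 - τ ^ 2))) ≤
    (XA / Y) * (1 - XB / (Y + Real.sqrt (Y ^ 2 - τ ^ 2))) := by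
  rw [f_eq hτ hX, f_eq hτ hY]
  have hXpos : (0:ℝ) < X := lt_of_lt_of_le hτ hX
  have hYpos : (0:ℝ) < Y := lt_of_lt_of_le hτ hY
  apply mul_le_mul_of_nonneg_left _ hXA.le
  rw [div_le_div_iff₀ (by positivity) (by positivity)]
  nlinarith [mul_le_mul_of_nonneg_left hkey (sq_nonneg τ)]

theorem stmt_0 (XA XB τ : ℝ) (hXA : 0 < XA) (hτ : 0 < τ) (hXB : XB > τ)
    (f : ℝ → ℝ)
    (hf : ∀ X₁, f X₁ = (XA / X₁) * (1 - XB / (X₁ + Real.sqrt (X₁ ^ 2 - τ ^ 2)))) :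
    MonotoneOn f (Set.Icc τ (Real.sqrt (XB ^ 2 + τ ^ 2))) ∧
    AntitoneOn f (Set.Ici (Real.sqrt (XB ^ 2 + τ ^ 2))) ∧
    ∀ X₁ ∈ Set.Ici τ, f X₁ ≤ f (Real.sqrt (XB ^ 2 + τ ^ 2)) := by
  have hXB0 : (0:ℝ) < XB := lt_trans hτ hXB
  set M := Real.sqrt (XB ^ 2 + τ ^ 2) with hM
  have hM2 : M ^ 2 = XB ^ 2 + τ ^ 2 := Real.sq_sqrt (by positivity)
  have hM0 : 0 ≤ M := Real.sqrt_nonneg _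
  have hτM : τ ≤ M := by
    rw [hM, ← Real.sqrt_sq hτ.le]
    exact Real.sqrt_le_sqrt (by nlinarith)
  -- common setup for applying the core lemmas
  have sqfact : ∀ x : ℝ, τ ≤ x → x ^ 2 = Real.sqrt (x ^ 2 - τ ^ 2) ^ 2 + τ ^ 2 := by
    intro x hx
    rw [Real.sq_sqrt (sqrt_nn hτ hx)]; ring
  have ssmono : ∀ x y : ℝ, τ ≤ x → x ≤ y →
      Real.sqrt (x ^ 2 - τ ^ 2) ≤ Real.sqrt (y ^ 2 - τ ^ 2) := by
    intro x y hx hxy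
    exact Real.sqrt_le_sqrt (by nlinarith)
  have hmono : MonotoneOn f (Set.Icc τ M) := by
    intro a ha b hb hab
    rw [hf a, hf b]
    apply f_step hXA hτ ha.1 hb.1
    apply core_mono hτ hXB0 ha.1 hb.1 (Real.sqrt_nonneg _) (Real.sqrt_nonneg _)
      (sqfact a ha.1) (sqfact b hb.1) (ssmono a b ha.1 hab)
    -- sqrt (b^2 - τ^2) ≤ XB
    rw [← Real.sqrt_sq hXB0.le]
    apply Real.sqrt_le_sqrt
    nlinarith [hb.2, hb.1, hM0]
  have hanti : AntitoneOn f (Set.Ici M) := by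
    intro a ha b hb hab
    have hτa : τ ≤ a := le_trans hτM ha
    have hτb : τ ≤ b := le_trans hτM hb
    rw [hf a, hf b]
    apply f_step hXA hτ hτb hτa
    apply core_anti hτ hXB0 hτa hτb (Real.sqrt_nonneg _) (Real.sqrt_nonneg _)
      (sqfact a hτa) (sqfact b hτb) (ssmono a b hτa hab)
    -- XB ≤ sqrt (a^2 - τ^2)
    rw [← Real.sqrt_sq hXB0.le]
    apply Real.sqrt_le_sqrt
    have : M ≤ a := ha
    nlinarith
  refine ⟨hmono, hanti, ?_⟩
  intro x hx
  rcases le_total x M with h | h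
  · exact hmono ⟨hx, h⟩ ⟨hτM, le_refl M⟩ h
  · exact hanti (Set.mem_Ici.2 (le_refl M)) (Set.mem_Ici.2 h) h
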